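/- Let M* be an n×(k+1) real matrix of rank k. Then there exist a subset P ⊆ [k+1] of size k, an index i ∈ [k+1] \ P, and a vector x ∈ ℝ^k with ‖x‖_∞ ≤ 1 such that the column M*_i equals the linear combination of the columns indexed by P with coefficients x. -/

import Mathlib

theorem stmt_5 (n k : ℕ) (M : Matrix (Fin n) (Fin (k + 1)) ℝ)
    (hrank : M.rank = k) :
    ∃ P : Finset (Fin (k + 1)), P.card = k ∧
      ∃ i : Fin (k + 1), i ∉ P ∧
        ∃ x : Fin (k + 1) → ℝ, (∀ j, |x j| ≤ 1) ∧
          ∀ r : Fin n, M r i = ∑ j ∈ P, x j * M r j := by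
  classical
  -- columns are linearly dependent
  have hdep : ¬ LinearIndependent ℝ (fun j : Fin (k + 1) => (Matrix.transpose M) j) := by
    intro h
    have := finrank_span_eq_card h
    rw [Matrix.rank_eq_finrank_span_cols] at hrank
    simp only [Fintype.card_fin] at this
    rw [show (Set.range fun j => Matrix.transpose M j) = Set.range (Matrix.transpose M)
      from rfl] at this
    rw [show M.col = M.transpose from rfl, this] at hrank
    omega
  rw [Fintype.not_linearIndependent_iff] at hdep
  obtain ⟨c, hc0, j0, hj0⟩ := hdep
  -- pick i maximizing |c i|
  obtain ⟨i, -, hi⟩ := Finset.exists_max_image Finset.univ (fun j => |c j|)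
    ⟨j0, Finset.mem_univ j0⟩
  have hci : c i ≠ 0 := by
    intro h
    have := hi j0 (Finset.mem_univ j0)
    rw [h, abs_zero] at this
    exact hj0 (abs_nonpos_iff.mp this)
  refine ⟨Finset.univ.erase i, by simp, i, Finset.notMem_erase i _,
    fun j => if j = i then 0 else -c j / c i, ?_, ?_⟩
  · intro j
    by_cases h : j = i
    · simp [h]
    · simp only [h, if_false]
      rw [abs_div, abs_neg, div_le_one (abs_pos.mpr hci)]
      exact hi j (Finset.mem_univ j)
  · intro r
    have hsum : ∑ j, c j * M r j = 0 := by
      have := congrFun hc0 r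
      simpa [Finset.sum_apply, Matrix.transpose_apply] using this
    rw [← Finset.add_sum_erase _ _ (Finset.mem_univ i)] at hsum
    have hterm : ∀ j ∈ Finset.univ.erase i,
        (if j = i then (0:ℝ) else -c j / c i) * M r j = c j * M r j * (-(c i)⁻¹) := by
      intro j hj
      have hji : j ≠ i := Finset.ne_of_mem_erase hj
      simp only [hji, if_false]
      rw [div_eq_mul_inv]
      ring
    rw [Finset.sum_congr rfl hterm, ← Finset.sum_mul]
    have hS : ∑ j ∈ Finset.univ.erase i, c j * M r j = -(c i * M r i) := by linarith
    rw [hS]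
    field_simp
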